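/- Let 0 < t ≤ 1 and -1/6 ≤ γ ≤ 1/6 with γ ≠ 0. Then both roots of the quadratic equation 2γ c² - (4γ + 1 + t²/6) c + 2γ + 1 - t²/3 = 0 in c are real, and exactly one root c⁻ satisfies |c⁻| ≤ 1 while the other root c⁺ satisfies |c⁺| ≥ 1; explicitly c^± = (4γ + 1 + t²/6 ± √((1+t²/6)² + 4γt²)) / (4γ). -/

import Mathlib

lemma dispersion_aux_bounds (t γ cm cp : ℝ) (ht2 : 0 < t^2) (ht1 : t^2 ≤ 1)
    (hγl : -1/6 ≤ γ) (hγ0 : γ ≠ 0)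
    (h1 : 2*γ*(1 - cm)*(1 - cp) = -t^2/2)
    (h2 : 2*γ*((-1) - cm)*((-1) - cp) = 8*γ + 2 - t^2/6)
    (hprod : 0 ≤ (cp - cm)*(2*γ)) :
    -1 ≤ cm ∧ cm ≤ 1 ∧ 1 ≤ |cp| := by
  rcases lt_or_gt_of_ne hγ0 with hγneg | hγpos
  · have hord : cp ≤ cm := by nlinarith
    have hq1 : (1 - cm)*(1 - cp) > 0 := by nlinarith
    have hq2 : ((-1) - cm)*((-1) - cp) < 0 := by nlinarith
    have hcp1 : cp < -1 := by nlinarith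
    have hcmm : -1 < cm := by nlinarith
    have hcm1 : cm < 1 := by nlinarith
    refine ⟨le_of_lt hcmm, le_of_lt hcm1, ?_⟩
    rw [le_abs]; right; linarith
  · have hord : cm ≤ cp := by nlinarith
    have hq1 : (1 - cm)*(1 - cp) < 0 := by nlinarith
    have hq2 : ((-1) - cm)*((-1) - cp) > 0 := by nlinarith
    have hcp1 : 1 < cp := by nlinarith
    have hcm1 : cm < 1 := by nlinarith
    have hcmm : -1 < cm := by nlinarith
    refine ⟨le_of_lt hcmm, le_of_lt hcm1, ?_⟩
    rw [le_abs]; left; linarith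

theorem dispersion_roots
    (t γ : ℝ) (ht0 : 0 < t) (ht1 : t ≤ 1)
    (hγl : -1/6 ≤ γ) (hγu : γ ≤ 1/6) (hγ0 : γ ≠ 0) :
    let cm := (4*γ + 1 + t^2/6 - Real.sqrt ((1 + t^2/6)^2 + 4*γ*t^2)) / (4*γ)
    let cp := (4*γ + 1 + t^2/6 + Real.sqrt ((1 + t^2/6)^2 + 4*γ*t^2)) / (4*γ)
    (2*γ*cm^2 - (4*γ + 1 + t^2/6)*cm + 2*γ + 1 - t^2/3 = 0) ∧
    (2*γ*cp^2 - (4*γ + 1 + t^2/6)*cp + 2*γ + 1 - t^2/3 = 0) ∧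
    |cm| ≤ 1 ∧ 1 ≤ |cp| ∧
    (∀ c : ℝ, 2*γ*c^2 - (4*γ + 1 + t^2/6)*c + 2*γ + 1 - t^2/3 = 0 → c = cm ∨ c = cp) := by
  intro cm cp
  have hcm : cm = (4*γ + 1 + t^2/6 - Real.sqrt ((1 + t^2/6)^2 + 4*γ*t^2)) / (4*γ) := rfl
  have hcp : cp = (4*γ + 1 + t^2/6 + Real.sqrt ((1 + t^2/6)^2 + 4*γ*t^2)) / (4*γ) := rfl
  clear_value cm cp
  have hD : (0:ℝ) ≤ (1 + t^2/6)^2 + 4*γ*t^2 := by nlinarith [sq_nonneg (1 - t^2/6), sq_nonneg t]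
  set s := Real.sqrt ((1 + t^2/6)^2 + 4*γ*t^2) with hs
  have hs2 : s^2 = (1 + t^2/6)^2 + 4*γ*t^2 := Real.sq_sqrt hD
  have hsnn : 0 ≤ s := Real.sqrt_nonneg _
  clear_value s
  clear hs
  have h4γ : (4*γ) ≠ 0 := by positivity
  have hfact : ∀ c : ℝ, 2*γ*c^2 - (4*γ + 1 + t^2/6)*c + 2*γ + 1 - t^2/3
      = 2*γ*(c - cm)*(c - cp) := by
    intro c
    rw [hcm, hcp]
    field_simp
    ring_nf
    linear_combination 216 * hs2
  have hzm : 2*γ*cm^2 - (4*γ + 1 + t^2/6)*cm + 2*γ + 1 - t^2/3 = 0 := by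
    rw [hfact]; ring
  have hzp : 2*γ*cp^2 - (4*γ + 1 + t^2/6)*cp + 2*γ + 1 - t^2/3 = 0 := by
    rw [hfact]; ring
  have h1 : 2*γ*(1 - cm)*(1 - cp) = -t^2/2 := by
    linear_combination -hfact 1
  have h2 : 2*γ*((-1) - cm)*((-1) - cp) = 8*γ + 2 - t^2/6 := by
    linear_combination -hfact (-1)
  have ht2 : 0 < t^2 := by positivity
  have ht1' : t^2 ≤ 1 := by nlinarith
  have hmul : (cp - cm) * (2*γ) = s := by rw [hcm, hcp]; field_simp; ring
  have hprod : 0 ≤ (cp - cm)*(2*γ) := by rw [hmul]; exact hsnn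
  obtain ⟨hb1, hb2, hb3⟩ :=
    dispersion_aux_bounds t γ cm cp ht2 ht1' hγl hγ0 h1 h2 hprod
  refine ⟨hzm, hzp, abs_le.mpr ⟨hb1, hb2⟩, hb3, ?_⟩
  intro c hc
  rw [hfact c] at hc
  have h2γ : (2*γ) ≠ 0 := by positivity
  rcases mul_eq_zero.mp hc with h | h
  · rcases mul_eq_zero.mp h with h | h
    · exact absurd h h2γ
    · left; linarith
  · right; linarith
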